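/- arXiv:2312.02591 — 3 statements merged into one kernel-verified Lean document; each statement's English description precedes it below -/
import Mathlib

section
/- Under the stated geometric coefficient bounds there exists a finite constant C > 0, depending only on A, ρ₁, ρ₂ and ρ₃, such that sup_{θ∈Θ} sup_{n∈ℕ} λ^ξ_{n1}(θ) ≤ C; that is, the largest eigenvalue of the idiosyncratic spectral density matrix Σ^ξ_n(θ) is bounded uniformly over all dimensions n and all frequencies θ. -/
open Matrix ComplexOrder

noncomputable section

/-- The `j`-th largest eigenvalue (1-indexed) of a Hermitian complex matrix
(junk value otherwise). -/
def eigJ {n : ℕ} (A : Matrix (Fin n) (Fin n) ℂ) (j : ℕ) : ℝ :=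
  if hA : A.IsHermitian then
    ((Finset.univ.val.map hA.eigenvalues).sort (· ≤ ·)).getD (n - j) 0
  else 0

/-- Inner product of `κ ∈ ℤ×ℤ×ℕ₀` with a frequency `θ`. -/
def kdot (κ : ℤ × ℤ × ℕ) (θ : Fin 3 → ℝ) : ℝ :=
  κ.1 * θ 0 + κ.2.1 * θ 1 + (κ.2.2 : ℝ) * θ 2

/-- The frequency cube Θ = [−π,π)³. -/
def Theta : Set (Fin 3 → ℝ) := Set.univ.pi fun _ => Set.Ico (-Real.pi) Real.pi

-- list getD bound
lemma list_getD_le {l : List ℝ} {C : ℝ} (h0 : 0 ≤ C) (h : ∀ x ∈ l, x ≤ C) (k : ℕ) :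
    l.getD k 0 ≤ C := by
  rcases lt_or_ge k l.length with hk | hk
  · rw [List.getD_eq_getElem l 0 hk]; exact h _ (List.getElem_mem hk)
  · rw [List.getD_eq_default l 0 hk]; exact h0

-- eigenvalue of Hermitian matrix bounded by max abs row sum
lemma eig_le_rowsum {n : ℕ} {M : Matrix (Fin n) (Fin n) ℂ} (hM : M.IsHermitian) (i : Fin n) :
    ∃ k, hM.eigenvalues i ≤ ∑ ℓ, ‖M k ℓ‖ := by
  have hv := hM.mulVec_eigenvectorBasis i
  set v : Fin n → ℂ := (WithLp.equiv 2 (Fin n → ℂ)) (hM.eigenvectorBasis i) with hvdef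
  have hvne : v ≠ 0 := by
    intro h
    exact hM.eigenvectorBasis.orthonormal.ne_zero i ((WithLp.equiv 2 (Fin n → ℂ)).injective h)
  have hev : Module.End.HasEigenvalue (Matrix.toLin' M) ((hM.eigenvalues i : ℂ)) := by
    apply Module.End.hasEigenvalue_of_hasEigenvector (x := v)
    refine ⟨Module.End.mem_eigenspace_iff.mpr ?_, hvne⟩
    rw [Matrix.toLin'_apply, hvdef, WithLp.equiv_apply, hv]
    funext x
    simp [Complex.real_smul]
  obtain ⟨k, hk⟩ := eigenvalue_mem_ball hev
  refine ⟨k, ?_⟩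
  rw [Metric.mem_closedBall, dist_eq_norm] at hk
  have h1 : (hM.eigenvalues i : ℝ) ≤ ‖(hM.eigenvalues i : ℂ)‖ := by
    rw [Complex.norm_real]; exact le_abs_self _
  have h2 : ‖(hM.eigenvalues i : ℂ)‖ ≤ ‖M k k‖ + ∑ j ∈ Finset.univ.erase k, ‖M k j‖ := by
    calc ‖(hM.eigenvalues i : ℂ)‖ ≤ ‖(hM.eigenvalues i : ℂ) - M k k‖ + ‖M k k‖ := by
          simpa using norm_sub_le_norm_sub_add_norm_sub ((hM.eigenvalues i : ℂ)) (M k k) 0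
      _ ≤ ‖M k k‖ + ∑ j ∈ Finset.univ.erase k, ‖M k j‖ := by
          rw [add_comm]; exact add_le_add_right hk _
  calc (hM.eigenvalues i : ℝ) ≤ _ := h1.trans h2
    _ = ∑ ℓ, ‖M k ℓ‖ := Finset.add_sum_erase _ (fun ℓ => ‖M k ℓ‖) (Finset.mem_univ k)

/-- under the geometric bounds `|β_{ℓj,κ}| ≤ A_{ℓj} ρ₁^{|κ₁|}ρ₂^{|κ₂|}ρ₃^{κ₃}`
with `Σ_j A_{ℓj} ≤ A` and `Σ_ℓ A_{ℓj} ≤ A`, the largest eigenvalue of the idiosyncratic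
spectral density matrix `Σ^ξ_n(θ)` (with entries `σ^ξ_{iℓ}(θ) = Σ_j b_{ij}(θ) conj(b_{ℓj}(θ))`,
`b_{ℓj}(θ) = Σ_κ β_{ℓj,κ} e^{−i⟨κ,θ⟩}`) is bounded by a constant `C`, depending only on
`A, ρ₁, ρ₂, ρ₃`, uniformly over all `n ∈ ℕ` and all `θ ∈ Θ`. -/
theorem stmt_7 (β : ℕ → ℕ → ℤ × ℤ × ℕ → ℂ)
    (A : ℝ) (hA : 0 < A) (Acoef : ℕ → ℕ → ℝ) (hAcoef : ∀ ℓ j, 0 < Acoef ℓ j)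
    (ρ₁ ρ₂ ρ₃ : ℝ)
    (hρ₁ : ρ₁ ∈ Set.Ioo (0 : ℝ) 1) (hρ₂ : ρ₂ ∈ Set.Ioo (0 : ℝ) 1)
    (hρ₃ : ρ₃ ∈ Set.Ioo (0 : ℝ) 1)
    (hβ : ∀ ℓ j κ, ‖β ℓ j κ‖ ≤ Acoef ℓ j * ρ₁ ^ κ.1.natAbs * ρ₂ ^ κ.2.1.natAbs * ρ₃ ^ κ.2.2)
    (hrow : ∀ ℓ, Summable (Acoef ℓ) ∧ ∑' j, Acoef ℓ j ≤ A)
    (hcol : ∀ j, Summable (fun ℓ => Acoef ℓ j) ∧ ∑' ℓ, Acoef ℓ j ≤ A)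
    (b : ℕ → ℕ → (Fin 3 → ℝ) → ℂ)
    (hb : ∀ ℓ j θ, b ℓ j θ =
      ∑' κ : ℤ × ℤ × ℕ, β ℓ j κ * Complex.exp (-(Complex.I * (kdot κ θ : ℝ))))
    (σξ : ℕ → ℕ → (Fin 3 → ℝ) → ℂ)
    (hσ : ∀ i ℓ θ, σξ i ℓ θ = ∑' j : ℕ, b i j θ * (starRingEnd ℂ) (b ℓ j θ)) :
    ∃ C > 0, ∀ θ ∈ Theta, ∀ n : ℕ,
      eigJ (Matrix.of fun i ℓ : Fin n => σξ (i : ℕ) (ℓ : ℕ) θ) 1 ≤ C := by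
  obtain ⟨hρ₁0, hρ₁1⟩ := hρ₁
  obtain ⟨hρ₂0, hρ₂1⟩ := hρ₂
  obtain ⟨hρ₃0, hρ₃1⟩ := hρ₃
  set r : ℤ × ℤ × ℕ → ℝ := fun κ => ρ₁ ^ κ.1.natAbs * (ρ₂ ^ κ.2.1.natAbs * ρ₃ ^ κ.2.2)
    with hrdef
  have hint : ∀ ρ : ℝ, 0 < ρ → ρ < 1 → Summable (fun m : ℤ => ρ ^ m.natAbs) := by
    intro ρ h0 h1
    apply Summable.of_nat_of_neg
    · simpa using summable_geometric_of_lt_one h0.le h1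
    · simpa using summable_geometric_of_lt_one h0.le h1
  have hr23 : Summable (fun p : ℤ × ℕ => ρ₂ ^ p.1.natAbs * ρ₃ ^ p.2) :=
    Summable.mul_of_nonneg (f := fun m : ℤ => ρ₂ ^ m.natAbs) (g := fun m : ℕ => ρ₃ ^ m)
      (hint ρ₂ hρ₂0 hρ₂1) (summable_geometric_of_lt_one hρ₃0.le hρ₃1)
      (fun m => by positivity) (fun m => by positivity)
  have hr : Summable r :=
    Summable.mul_of_nonneg (f := fun m : ℤ => ρ₁ ^ m.natAbs)
      (g := fun p : ℤ × ℕ => ρ₂ ^ p.1.natAbs * ρ₃ ^ p.2)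
      (hint ρ₁ hρ₁0 hρ₁1) hr23 (fun m => by positivity) (fun p => by positivity)
  set S : ℝ := ∑' κ, r κ with hSdef
  have hS0 : 0 ≤ S := tsum_nonneg (fun κ => by positivity)
  have hAle : ∀ ℓ j, Acoef ℓ j ≤ A := fun ℓ j =>
    le_trans (Summable.le_tsum (hcol j).1 ℓ (fun _ _ => (hAcoef _ _).le)) (hcol j).2
  -- bound on b
  have hterm : ∀ ℓ j θ κ,
      ‖β ℓ j κ * Complex.exp (-(Complex.I * ((kdot κ θ : ℝ) : ℂ)))‖ ≤ Acoef ℓ j * r κ := by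
    intro ℓ j θ κ
    rw [norm_mul]
    have he : ‖Complex.exp (-(Complex.I * ((kdot κ θ : ℝ) : ℂ)))‖ = 1 := by
      rw [Complex.norm_exp]
      simp
    rw [he, mul_one]
    calc ‖β ℓ j κ‖ ≤ _ := hβ ℓ j κ
      _ = Acoef ℓ j * r κ := by rw [hrdef]; ring
  have hbn : ∀ ℓ j θ, ‖b ℓ j θ‖ ≤ Acoef ℓ j * S := by
    intro ℓ j θ
    have hsn : Summable (fun κ =>
        ‖β ℓ j κ * Complex.exp (-(Complex.I * ((kdot κ θ : ℝ) : ℂ)))‖) :=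
      Summable.of_nonneg_of_le (fun _ => norm_nonneg _) (hterm ℓ j θ) (hr.mul_left _)
    rw [hb]
    calc ‖∑' κ : ℤ × ℤ × ℕ, β ℓ j κ * Complex.exp (-(Complex.I * ((kdot κ θ : ℝ) : ℂ)))‖
        ≤ ∑' κ, ‖β ℓ j κ * Complex.exp (-(Complex.I * ((kdot κ θ : ℝ) : ℂ)))‖ :=
          norm_tsum_le_tsum_norm hsn
      _ ≤ ∑' κ, Acoef ℓ j * r κ := Summable.tsum_le_tsum (hterm ℓ j θ) hsn (hr.mul_left _)
      _ = Acoef ℓ j * S := tsum_mul_left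
  have hTsum : ∀ i ℓ, Summable (fun j => Acoef i j * Acoef ℓ j) := fun i ℓ =>
    Summable.of_nonneg_of_le (fun j => mul_nonneg (hAcoef i j).le (hAcoef ℓ j).le)
      (fun j => mul_le_mul_of_nonneg_left (hAle ℓ j) (hAcoef i j).le) ((hrow i).1.mul_right A)
  have hσterm : ∀ i ℓ θ j, ‖b i j θ * (starRingEnd ℂ) (b ℓ j θ)‖ ≤
      S * S * (Acoef i j * Acoef ℓ j) := by
    intro i ℓ θ j
    rw [norm_mul, RingHomIsometric.norm_map]
    calc ‖b i j θ‖ * ‖b ℓ j θ‖ ≤ (Acoef i j * S) * (Acoef ℓ j * S) :=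
        mul_le_mul (hbn i j θ) (hbn ℓ j θ) (norm_nonneg _) (mul_nonneg (hAcoef i j).le hS0)
      _ = S * S * (Acoef i j * Acoef ℓ j) := by ring
  have hσn : ∀ i ℓ θ, ‖σξ i ℓ θ‖ ≤ ∑' j, S * S * (Acoef i j * Acoef ℓ j) := by
    intro i ℓ θ
    have hsn : Summable (fun j => ‖b i j θ * (starRingEnd ℂ) (b ℓ j θ)‖) :=
      Summable.of_nonneg_of_le (fun _ => norm_nonneg _) (hσterm i ℓ θ)
        ((hTsum i ℓ).mul_left _)
    rw [hσ]
    calc ‖∑' j : ℕ, b i j θ * (starRingEnd ℂ) (b ℓ j θ)‖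
        ≤ ∑' j, ‖b i j θ * (starRingEnd ℂ) (b ℓ j θ)‖ := norm_tsum_le_tsum_norm hsn
      _ ≤ ∑' j, S * S * (Acoef i j * Acoef ℓ j) :=
          Summable.tsum_le_tsum (hσterm i ℓ θ) hsn ((hTsum i ℓ).mul_left _)
  refine ⟨S * S * A * A + 1, by nlinarith [mul_nonneg (mul_nonneg (mul_nonneg hS0 hS0) hA.le) hA.le], ?_⟩
  intro θ _ n
  set M : Matrix (Fin n) (Fin n) ℂ := Matrix.of fun i ℓ : Fin n => σξ (i : ℕ) (ℓ : ℕ) θ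
    with hMdef
  have hM : M.IsHermitian := by
    ext i ℓ
    show (starRingEnd ℂ) (M ℓ i) = M i ℓ
    show (starRingEnd ℂ) (σξ (ℓ : ℕ) (i : ℕ) θ) = σξ (i : ℕ) (ℓ : ℕ) θ
    rw [hσ, hσ, starRingEnd_apply, tsum_star]
    apply tsum_congr
    intro j
    simp only [starRingEnd_apply]
    rw [star_mul', star_star, mul_comm]
  have hrowbound : ∀ k : Fin n, ∑ ℓ : Fin n, ‖M k ℓ‖ ≤ S * S * A * A := by
    intro k
    have hsummand : ∀ ℓ : Fin n, Summable (fun j => S * S * (Acoef (k : ℕ) j * Acoef (ℓ : ℕ) j)) :=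
      fun ℓ => (hTsum _ _).mul_left _
    calc ∑ ℓ : Fin n, ‖M k ℓ‖
        ≤ ∑ ℓ : Fin n, ∑' j, S * S * (Acoef (k : ℕ) j * Acoef (ℓ : ℕ) j) :=
          Finset.sum_le_sum (fun ℓ _ => hσn (k : ℕ) (ℓ : ℕ) θ)
      _ = ∑' j, ∑ ℓ : Fin n, S * S * (Acoef (k : ℕ) j * Acoef (ℓ : ℕ) j) :=
          (Summable.tsum_finsetSum (fun ℓ _ => hsummand ℓ)).symm
      _ ≤ ∑' j, S * S * A * Acoef (k : ℕ) j := by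
          apply Summable.tsum_le_tsum _ (summable_sum (fun ℓ _ => hsummand ℓ))
            (((hrow (k : ℕ)).1.mul_left _))
          intro j
          have hfin : ∑ ℓ : Fin n, Acoef (ℓ : ℕ) j ≤ A := by
            rw [Fin.sum_univ_eq_sum_range (fun m => Acoef m j)]
            exact le_trans (Summable.sum_le_tsum _ (fun m _ => (hAcoef m j).le) (hcol j).1) (hcol j).2
          calc ∑ ℓ : Fin n, S * S * (Acoef (k : ℕ) j * Acoef (ℓ : ℕ) j)
              = S * S * Acoef (k : ℕ) j * ∑ ℓ : Fin n, Acoef (ℓ : ℕ) j := by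
                rw [Finset.mul_sum]; apply Finset.sum_congr rfl; intro ℓ _; ring
            _ ≤ S * S * Acoef (k : ℕ) j * A :=
                mul_le_mul_of_nonneg_left hfin
                  (mul_nonneg (mul_nonneg hS0 hS0) (hAcoef _ j).le)
            _ = S * S * A * Acoef (k : ℕ) j := by ring
      _ = S * S * A * ∑' j, Acoef (k : ℕ) j := tsum_mul_left
      _ ≤ S * S * A * A := mul_le_mul_of_nonneg_left (hrow _).2 (mul_nonneg (mul_nonneg hS0 hS0) hA.le)
  rw [eigJ, dif_pos hM]
  apply list_getD_le (by nlinarith [mul_nonneg (mul_nonneg (mul_nonneg hS0 hS0) hA.le) hA.le])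
  intro x hx
  rw [Multiset.mem_sort] at hx
  obtain ⟨i, _, hix⟩ := Multiset.mem_map.mp hx
  obtain ⟨k, hk⟩ := eig_le_rowsum hM i
  rw [← hix]
  calc hM.eigenvalues i ≤ ∑ ℓ, ‖M k ℓ‖ := hk
    _ ≤ S * S * A * A := hrowbound k
    _ ≤ S * S * A * A + 1 := by linarith

end
end

section
/- For every ℓ ∈ ℕ and every ς = (s₁,s₂,t) ∈ ℤ³: if t < 0 then x_{ℓ,ς} = x*_{ℓ,ς}; and there exist ρ̃₁, ρ̃₂, ρ̃₃ ∈ (0,1) (namely ρ̃_h = max(ρ^χ_h, ρ^ξ_h) for h = 1,2,3) and a finite constant Ã₂ > 0, depending only on p, Ā, A^χ and A^ξ, such that for all ς with t ≥ 0, ( E|x_{ℓ,ς} − x*_{ℓ,ς}|^p )^{1/p} ≤ Ã₂ · ρ̃₁^{|s₁|} · ρ̃₂^{|s₂|} · ρ̃₃^{t}. -/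
open MeasureTheory Filter
open scoped ENNReal

noncomputable section

/-- Spatio-temporal lag: `ς − κ` with `ς ∈ ℤ³` and `κ ∈ ℤ×ℤ×ℕ₀`. -/
def subK (ς : ℤ × ℤ × ℤ) (κ : ℤ × ℤ × ℕ) : ℤ × ℤ × ℤ :=
  (ς.1 - κ.1, ς.2.1 - κ.2.1, ς.2.2 - (κ.2.2 : ℤ))

/-- with `x` the GSTFM process and `x*` its coupled version (innovations
replaced at the origin), for every `ℓ` and `ς = (s₁,s₂,t)`:  if `t < 0` then
`x_{ℓ,ς} = x*_{ℓ,ς}` (a.e.), and there is a constant `Ã₂ > 0` such that for `t ≥ 0`,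
`(E|x_{ℓ,ς} − x*_{ℓ,ς}|^p)^{1/p} ≤ Ã₂ ρ̃₁^{|s₁|} ρ̃₂^{|s₂|} ρ̃₃^{t}` where
`ρ̃_h = max(ρ^χ_h, ρ^ξ_h)`. -/
theorem stmt_9 {Ω : Type} [MeasurableSpace Ω] (μ : Measure Ω) [IsProbabilityMeasure μ]
    (q : ℕ) (p : ℝ) (hp : 1 ≤ p)
    (v : Fin q → ℤ × ℤ × ℤ → Ω → ℂ) (ε : ℕ → ℤ × ℤ × ℤ → Ω → ℂ)
    (Abar : ℝ) (hAbar : 0 < Abar)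
    (hv : ∀ j ς, MemLp (v j ς) (ENNReal.ofReal p) μ ∧ ∫ ω, ‖v j ς ω‖ ^ p ∂μ ≤ Abar)
    (hε : ∀ j ς, MemLp (ε j ς) (ENNReal.ofReal p) μ ∧ ∫ ω, ‖ε j ς ω‖ ^ p ∂μ ≤ Abar)
    (c : ℕ → Fin q → ℤ × ℤ × ℕ → ℂ) (β : ℕ → ℕ → ℤ × ℤ × ℕ → ℂ)
    (ρχ₁ ρχ₂ ρχ₃ ρξ₁ ρξ₂ ρξ₃ : ℝ)
    (hρχ₁ : ρχ₁ ∈ Set.Ioo (0 : ℝ) 1) (hρχ₂ : ρχ₂ ∈ Set.Ioo (0 : ℝ) 1)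
    (hρχ₃ : ρχ₃ ∈ Set.Ioo (0 : ℝ) 1) (hρξ₁ : ρξ₁ ∈ Set.Ioo (0 : ℝ) 1)
    (hρξ₂ : ρξ₂ ∈ Set.Ioo (0 : ℝ) 1) (hρξ₃ : ρξ₃ ∈ Set.Ioo (0 : ℝ) 1)
    (Aχ : ℕ → Fin q → ℝ) (Aξ : ℕ → ℕ → ℝ)
    (hAχpos : ∀ ℓ j, 0 < Aχ ℓ j) (hAξpos : ∀ ℓ j, 0 < Aξ ℓ j)
    (hc : ∀ ℓ j κ, ‖c ℓ j κ‖ ≤ Aχ ℓ j * ρχ₁ ^ κ.1.natAbs * ρχ₂ ^ κ.2.1.natAbs * ρχ₃ ^ κ.2.2)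
    (hβ : ∀ ℓ j κ, ‖β ℓ j κ‖ ≤ Aξ ℓ j * ρξ₁ ^ κ.1.natAbs * ρξ₂ ^ κ.2.1.natAbs * ρξ₃ ^ κ.2.2)
    (AX AXi : ℝ)
    (hAχsum : ∀ ℓ, ∑ j, Aχ ℓ j ≤ AX)
    (hAξsum : ∀ ℓ, Summable (Aξ ℓ) ∧ ∑' j, Aξ ℓ j ≤ AXi)
    -- coupled innovations
    (vt : Fin q → Ω → ℂ) (εt : ℕ → Ω → ℂ)
    (hvt : ∀ j, MemLp (vt j) (ENNReal.ofReal p) μ ∧ ∫ ω, ‖vt j ω‖ ^ p ∂μ ≤ Abar)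
    (hεt : ∀ j, MemLp (εt j) (ENNReal.ofReal p) μ ∧ ∫ ω, ‖εt j ω‖ ^ p ∂μ ≤ Abar)
    (vstar : Fin q → ℤ × ℤ × ℤ → Ω → ℂ) (εstar : ℕ → ℤ × ℤ × ℤ → Ω → ℂ)
    (hvstar : ∀ j ς, vstar j ς = if ς = ((0 : ℤ), (0 : ℤ), (0 : ℤ)) then vt j else v j ς)
    (hεstar : ∀ j ς, εstar j ς = if ς = ((0 : ℤ), (0 : ℤ), (0 : ℤ)) then εt j else ε j ς)
    -- the processes, as L^p-convergent series
    (x xstar : ℕ → ℤ × ℤ × ℤ → Ω → ℂ)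
    (hx : ∀ ℓ ς, MemLp (x ℓ ς) (ENNReal.ofReal p) μ ∧
      Tendsto (fun F : Finset ((ℤ × ℤ × ℕ) × (Fin q ⊕ ℕ)) =>
        eLpNorm (fun ω => x ℓ ς ω - ∑ t ∈ F,
            Sum.elim (fun j => c ℓ j t.1 * v j (subK ς t.1) ω)
                     (fun j => β ℓ j t.1 * ε j (subK ς t.1) ω) t.2)
          (ENNReal.ofReal p) μ) atTop (nhds 0))
    (hxstar : ∀ ℓ ς, MemLp (xstar ℓ ς) (ENNReal.ofReal p) μ ∧
      Tendsto (fun F : Finset ((ℤ × ℤ × ℕ) × (Fin q ⊕ ℕ)) =>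
        eLpNorm (fun ω => xstar ℓ ς ω - ∑ t ∈ F,
            Sum.elim (fun j => c ℓ j t.1 * vstar j (subK ς t.1) ω)
                     (fun j => β ℓ j t.1 * εstar j (subK ς t.1) ω) t.2)
          (ENNReal.ofReal p) μ) atTop (nhds 0)) :
    (∀ (ℓ : ℕ) (ς : ℤ × ℤ × ℤ), ς.2.2 < 0 → x ℓ ς =ᵐ[μ] xstar ℓ ς) ∧
    ∃ C > 0, ∀ (ℓ : ℕ) (ς : ℤ × ℤ × ℤ), 0 ≤ ς.2.2 →
      (∫ ω, ‖x ℓ ς ω - xstar ℓ ς ω‖ ^ p ∂μ) ^ (1 / p) ≤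
        C * max ρχ₁ ρξ₁ ^ ς.1.natAbs * max ρχ₂ ρξ₂ ^ ς.2.1.natAbs *
          max ρχ₃ ρξ₃ ^ ς.2.2.toNat := by
  classical
  have hp0 : (0 : ℝ) < p := lt_of_lt_of_le one_pos hp
  set P : ℝ≥0∞ := ENNReal.ofReal p with hPdef
  have hP0 : P ≠ 0 := by
    simp only [hPdef, ne_eq, ENNReal.ofReal_eq_zero, not_le]; linarith
  have hPtop : P ≠ ⊤ := ENNReal.ofReal_ne_top
  have hP1 : (1 : ℝ≥0∞) ≤ P := by
    rw [hPdef, ← ENNReal.ofReal_one]; exact ENNReal.ofReal_le_ofReal hp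
  have hPt : P.toReal = p := ENNReal.toReal_ofReal hp0.le
  set M : ℝ≥0∞ := ENNReal.ofReal (Abar ^ p⁻¹) with hMdef
  -- uniform Lᵖ bound on innovations
  have hM : ∀ f : Ω → ℂ, MemLp f P μ → (∫ ω, ‖f ω‖ ^ p ∂μ) ≤ Abar →
      eLpNorm f P μ ≤ M := by
    intro f hf hint
    rw [hf.eLpNorm_eq_integral_rpow_norm hP0 hPtop, hPt]
    exact ENNReal.ofReal_le_ofReal
      (Real.rpow_le_rpow
        (integral_nonneg fun ω => Real.rpow_nonneg (norm_nonneg _) _) hint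
        (inv_nonneg.mpr hp0.le))
  have hvstarLp : ∀ j σ, MemLp (vstar j σ) P μ := by
    intro j σ; rw [hvstar]
    split
    · exact (hvt j).1
    · exact (hv j σ).1
  have hεstarLp : ∀ j σ, MemLp (εstar j σ) P μ := by
    intro j σ; rw [hεstar]
    split
    · exact (hεt j).1
    · exact (hε j σ).1
  have hvstarM : ∀ j σ, eLpNorm (vstar j σ) P μ ≤ M := by
    intro j σ; rw [hvstar]
    split
    · exact hM _ (hvt j).1 (hvt j).2
    · exact hM _ (hv j σ).1 (hv j σ).2
  have hεstarM : ∀ j σ, eLpNorm (εstar j σ) P μ ≤ M := by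
    intro j σ; rw [hεstar]
    split
    · exact hM _ (hεt j).1 (hεt j).2
    · exact hM _ (hε j σ).1 (hε j σ).2
  -- term functions
  set ι : Type := (ℤ × ℤ × ℕ) × (Fin q ⊕ ℕ) with hι
  set g : ℕ → (ℤ × ℤ × ℤ) → ι → Ω → ℂ := fun ℓ ς t ω =>
    Sum.elim (fun j => c ℓ j t.1 * v j (subK ς t.1) ω)
             (fun j => β ℓ j t.1 * ε j (subK ς t.1) ω) t.2 with hg
  set gs : ℕ → (ℤ × ℤ × ℤ) → ι → Ω → ℂ := fun ℓ ς t ω =>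
    Sum.elim (fun j => c ℓ j t.1 * vstar j (subK ς t.1) ω)
             (fun j => β ℓ j t.1 * εstar j (subK ς t.1) ω) t.2 with hgs
  have hgm : ∀ ℓ ς t, AEStronglyMeasurable (g ℓ ς t) μ := by
    intro ℓ ς t
    rcases t with ⟨κ, j | j⟩
    · exact ((hv j _).1.aestronglyMeasurable).const_mul _
    · exact ((hε j _).1.aestronglyMeasurable).const_mul _
  have hgsm : ∀ ℓ ς t, AEStronglyMeasurable (gs ℓ ς t) μ := by
    intro ℓ ς t
    rcases t with ⟨κ, j | j⟩
    · exact ((hvstarLp j _).aestronglyMeasurable).const_mul _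
    · exact ((hεstarLp j _).aestronglyMeasurable).const_mul _
  -- the key limiting argument
  have main : ∀ (ℓ : ℕ) (ς : ℤ × ℤ × ℤ) (B : ℝ≥0∞),
      (∀ F : Finset ι,
        eLpNorm (fun ω => (∑ t ∈ F, g ℓ ς t ω) - ∑ t ∈ F, gs ℓ ς t ω) P μ ≤ B) →
      eLpNorm (fun ω => x ℓ ς ω - xstar ℓ ς ω) P μ ≤ B := by
    intro ℓ ς B hB
    have hxm := (hx ℓ ς).1.aestronglyMeasurable
    have hxsm := (hxstar ℓ ς).1.aestronglyMeasurable
    have hSm : ∀ F : Finset ι,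
        AEStronglyMeasurable (fun ω => ∑ t ∈ F, g ℓ ς t ω) μ := fun F =>
      Finset.aestronglyMeasurable_fun_sum F fun t _ => hgm ℓ ς t
    have hSsm : ∀ F : Finset ι,
        AEStronglyMeasurable (fun ω => ∑ t ∈ F, gs ℓ ς t ω) μ := fun F =>
      Finset.aestronglyMeasurable_fun_sum F fun t _ => hgsm ℓ ς t
    have key : ∀ F : Finset ι,
        eLpNorm (fun ω => x ℓ ς ω - xstar ℓ ς ω) P μ ≤
          eLpNorm (fun ω => x ℓ ς ω - ∑ t ∈ F, g ℓ ς t ω) P μ +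
          eLpNorm (fun ω => xstar ℓ ς ω - ∑ t ∈ F, gs ℓ ς t ω) P μ + B := by
      intro F
      have hrw : (fun ω => x ℓ ς ω - xstar ℓ ς ω) =
          ((fun ω => x ℓ ς ω - ∑ t ∈ F, g ℓ ς t ω) -
            (fun ω => xstar ℓ ς ω - ∑ t ∈ F, gs ℓ ς t ω)) +
          (fun ω => (∑ t ∈ F, g ℓ ς t ω) - ∑ t ∈ F, gs ℓ ς t ω) := by
        funext ω; simp only [Pi.add_apply, Pi.sub_apply]; ring
      rw [hrw]
      refine le_trans (eLpNorm_add_le ((hxm.sub (hSm F)).sub (hxsm.sub (hSsm F)))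
        ((hSm F).sub (hSsm F)) hP1) ?_
      exact add_le_add (eLpNorm_sub_le (hxm.sub (hSm F)) (hxsm.sub (hSsm F)) hP1) (hB F)
    have hlim : Tendsto (fun F : Finset ι =>
        eLpNorm (fun ω => x ℓ ς ω - ∑ t ∈ F, g ℓ ς t ω) P μ +
        eLpNorm (fun ω => xstar ℓ ς ω - ∑ t ∈ F, gs ℓ ς t ω) P μ + B)
        atTop (nhds B) := by
      have h1 : Tendsto (fun F : Finset ι =>
          eLpNorm (fun ω => x ℓ ς ω - ∑ t ∈ F, g ℓ ς t ω) P μ) atTop (nhds 0) :=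
        (hx ℓ ς).2
      have h2 : Tendsto (fun F : Finset ι =>
          eLpNorm (fun ω => xstar ℓ ς ω - ∑ t ∈ F, gs ℓ ς t ω) P μ) atTop (nhds 0) :=
        (hxstar ℓ ς).2
      have := (h1.add h2).add (tendsto_const_nhds (x := B) (f := atTop))
      simpa using this
    exact ge_of_tendsto hlim (Eventually.of_forall key)
  -- part 1 : t < 0
  have part1 : ∀ (ℓ : ℕ) (ς : ℤ × ℤ × ℤ), ς.2.2 < 0 → x ℓ ς =ᵐ[μ] xstar ℓ ς := by
    intro ℓ ς hςneg
    have hne : ∀ κ : ℤ × ℤ × ℕ, subK ς κ ≠ ((0 : ℤ), (0 : ℤ), (0 : ℤ)) := by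
      intro κ h
      have h3 : ς.2.2 - (κ.2.2 : ℤ) = 0 := congrArg (fun z : ℤ × ℤ × ℤ => z.2.2) h
      omega
    have hgeq : ∀ t : ι, g ℓ ς t = gs ℓ ς t := by
      intro t
      rcases t with ⟨κ, j | j⟩
      · simp only [hg, hgs, Sum.elim_inl, hvstar j (subK ς κ), if_neg (hne κ)]
      · simp only [hg, hgs, Sum.elim_inr, hεstar j (subK ς κ), if_neg (hne κ)]
    have h0 : eLpNorm (fun ω => x ℓ ς ω - xstar ℓ ς ω) P μ ≤ 0 := by
      apply main
      intro F
      have : (fun ω => (∑ t ∈ F, g ℓ ς t ω) - ∑ t ∈ F, gs ℓ ς t ω) = fun _ => (0 : ℂ) := by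
        funext ω
        simp only [sub_eq_zero]
        exact Finset.sum_congr rfl fun t _ => congrFun (hgeq t) ω
      rw [this]
      simp [eLpNorm_zero]
    have h0' : eLpNorm (fun ω => x ℓ ς ω - xstar ℓ ς ω) P μ = 0 := le_antisymm h0 zero_le
    have hae : (fun ω => x ℓ ς ω - xstar ℓ ς ω) =ᵐ[μ] 0 :=
      (eLpNorm_eq_zero_iff
        ((hx ℓ ς).1.aestronglyMeasurable.sub (hxstar ℓ ς).1.aestronglyMeasurable) hP0).mp h0'
    filter_upwards [hae] with ω hω
    exact sub_eq_zero.mp hω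
  refine ⟨part1, ?_⟩
  -- part 2 : t ≥ 0
  have hAXnn : (0 : ℝ) ≤ AX :=
    le_trans (Finset.sum_nonneg fun j _ => (hAχpos 0 j).le) (hAχsum 0)
  have hAXinn : (0 : ℝ) ≤ AXi :=
    le_trans (tsum_nonneg fun j => (hAξpos 0 j).le) (hAξsum 0).2
  set C0 : ℝ := (AX + AXi) * (Abar ^ p⁻¹ + Abar ^ p⁻¹) with hC0
  have hC0nn : 0 ≤ C0 := by
    apply mul_nonneg (by linarith)
    have := Real.rpow_nonneg hAbar.le p⁻¹
    linarith
  refine ⟨C0 + 1, by linarith, ?_⟩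
  intro ℓ ς hςnn
  set m₁ : ℝ := max ρχ₁ ρξ₁ with hm₁
  set m₂ : ℝ := max ρχ₂ ρξ₂ with hm₂
  set m₃ : ℝ := max ρχ₃ ρξ₃ with hm₃
  have hm₁pos : 0 < m₁ := lt_max_of_lt_left hρχ₁.1
  have hm₂pos : 0 < m₂ := lt_max_of_lt_left hρχ₂.1
  have hm₃pos : 0 < m₃ := lt_max_of_lt_left hρχ₃.1
  set R : ℝ := m₁ ^ ς.1.natAbs * m₂ ^ ς.2.1.natAbs * m₃ ^ ς.2.2.toNat with hR
  have hRpos : 0 < R := by positivity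
  set κ₀ : ℤ × ℤ × ℕ := (ς.1, ς.2.1, ς.2.2.toNat) with hκ₀
  have hκ₀sub : subK ς κ₀ = ((0 : ℤ), (0 : ℤ), (0 : ℤ)) := by
    simp only [subK, hκ₀]
    refine Prod.ext (by ring) (Prod.ext (by ring) ?_)
    simp only
    omega
  have hsubne : ∀ κ : ℤ × ℤ × ℕ, κ ≠ κ₀ →
      subK ς κ ≠ ((0 : ℤ), (0 : ℤ), (0 : ℤ)) := by
    intro κ hκ h
    apply hκ
    have h1 : ς.1 - κ.1 = 0 := congrArg (fun z : ℤ × ℤ × ℤ => z.1) h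
    have h2 : ς.2.1 - κ.2.1 = 0 := congrArg (fun z : ℤ × ℤ × ℤ => z.2.1) h
    have h3 : ς.2.2 - (κ.2.2 : ℤ) = 0 := congrArg (fun z : ℤ × ℤ × ℤ => z.2.2) h
    have : κ.2.2 = ς.2.2.toNat := by omega
    rcases κ with ⟨a, b, n⟩
    simp only [hκ₀, Prod.mk.injEq] at *
    exact ⟨by omega, by omega, this⟩
  -- coefficient bounds
  have hcoef : ∀ (A ρ₁ ρ₂ ρ₃ : ℝ), 0 < A → 0 < ρ₁ → 0 < ρ₂ → 0 < ρ₃ →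
      ρ₁ ≤ m₁ → ρ₂ ≤ m₂ → ρ₃ ≤ m₃ →
      A * ρ₁ ^ κ₀.1.natAbs * ρ₂ ^ κ₀.2.1.natAbs * ρ₃ ^ κ₀.2.2 ≤ A * R := by
    intro A ρ₁ ρ₂ ρ₃ hA h1 h2 h3 hle1 hle2 hle3
    have e1 : ρ₁ ^ κ₀.1.natAbs ≤ m₁ ^ κ₀.1.natAbs := pow_le_pow_left₀ h1.le hle1 _
    have e2 : ρ₂ ^ κ₀.2.1.natAbs ≤ m₂ ^ κ₀.2.1.natAbs := pow_le_pow_left₀ h2.le hle2 _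
    have e3 : ρ₃ ^ κ₀.2.2 ≤ m₃ ^ κ₀.2.2 := pow_le_pow_left₀ h3.le hle3 _
    have t1 : A * ρ₁ ^ κ₀.1.natAbs ≤ A * m₁ ^ κ₀.1.natAbs :=
      mul_le_mul_of_nonneg_left e1 hA.le
    have t2 : A * ρ₁ ^ κ₀.1.natAbs * ρ₂ ^ κ₀.2.1.natAbs ≤
        A * m₁ ^ κ₀.1.natAbs * m₂ ^ κ₀.2.1.natAbs :=
      mul_le_mul t1 e2 (pow_nonneg h2.le _)
        (mul_nonneg hA.le (pow_nonneg hm₁pos.le _))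
    have t3 : A * ρ₁ ^ κ₀.1.natAbs * ρ₂ ^ κ₀.2.1.natAbs * ρ₃ ^ κ₀.2.2 ≤
        A * m₁ ^ κ₀.1.natAbs * m₂ ^ κ₀.2.1.natAbs * m₃ ^ κ₀.2.2 :=
      mul_le_mul t2 e3 (pow_nonneg h3.le _)
        (mul_nonneg (mul_nonneg hA.le (pow_nonneg hm₁pos.le _)) (pow_nonneg hm₂pos.le _))
    refine le_trans t3 (le_of_eq ?_)
    rw [hR, hκ₀]
    ring
  have hcoefc : ∀ j, ‖c ℓ j κ₀‖ ≤ Aχ ℓ j * R := fun j =>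
    le_trans (hc ℓ j κ₀) (hcoef _ _ _ _ (hAχpos ℓ j) hρχ₁.1 hρχ₂.1 hρχ₃.1
      (le_max_left _ _) (le_max_left _ _) (le_max_left _ _))
  have hcoefβ : ∀ j, ‖β ℓ j κ₀‖ ≤ Aξ ℓ j * R := fun j =>
    le_trans (hβ ℓ j κ₀) (hcoef _ _ _ _ (hAξpos ℓ j) hρξ₁.1 hρξ₂.1 hρξ₃.1
      (le_max_right _ _) (le_max_right _ _) (le_max_right _ _))
  -- per-term eLpNorm bounds
  set d : Fin q ⊕ ℕ → ℝ≥0∞ := Sum.elim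
    (fun j => ENNReal.ofReal (Aχ ℓ j * R) * (M + M))
    (fun j => ENNReal.ofReal (Aξ ℓ j * R) * (M + M)) with hd
  have hdiff : ∀ t : ι, eLpNorm (fun ω => g ℓ ς t ω - gs ℓ ς t ω) P μ ≤
      (if t.1 = κ₀ then d t.2 else 0) := by
    intro t
    by_cases ht : t.1 = κ₀
    · rw [if_pos ht]
      rcases t with ⟨κ, j | j⟩
      · simp only at ht
        subst ht
        have heq : (fun ω => g ℓ ς (κ₀, Sum.inl j) ω - gs ℓ ς (κ₀, Sum.inl j) ω) =
            (c ℓ j κ₀) • (v j (subK ς κ₀) - vstar j (subK ς κ₀)) := by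
          funext ω
          simp only [hg, hgs, Sum.elim_inl, Pi.smul_apply, Pi.sub_apply, smul_eq_mul]
          ring
        rw [heq, eLpNorm_const_smul]
        rw [hd]
        simp only [Sum.elim_inl]
        have h1 : (‖c ℓ j κ₀‖₊ : ℝ≥0∞) ≤ ENNReal.ofReal (Aχ ℓ j * R) := by
          rw [← enorm_eq_nnnorm, ← ofReal_norm]
          exact ENNReal.ofReal_le_ofReal (hcoefc j)
        have h2 : eLpNorm (v j (subK ς κ₀) - vstar j (subK ς κ₀)) P μ ≤ M + M := by
          refine le_trans (eLpNorm_sub_le (hv j _).1.aestronglyMeasurable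
            (hvstarLp j _).aestronglyMeasurable hP1) ?_
          exact add_le_add (hM _ (hv j _).1 (hv j _).2) (hvstarM j _)
        exact mul_le_mul' h1 h2
      · simp only at ht
        subst ht
        have heq : (fun ω => g ℓ ς (κ₀, Sum.inr j) ω - gs ℓ ς (κ₀, Sum.inr j) ω) =
            (β ℓ j κ₀) • (ε j (subK ς κ₀) - εstar j (subK ς κ₀)) := by
          funext ω
          simp only [hg, hgs, Sum.elim_inr, Pi.smul_apply, Pi.sub_apply, smul_eq_mul]
          ring
        rw [heq, eLpNorm_const_smul]
        rw [hd]
        simp only [Sum.elim_inr]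
        have h1 : (‖β ℓ j κ₀‖₊ : ℝ≥0∞) ≤ ENNReal.ofReal (Aξ ℓ j * R) := by
          rw [← enorm_eq_nnnorm, ← ofReal_norm]
          exact ENNReal.ofReal_le_ofReal (hcoefβ j)
        have h2 : eLpNorm (ε j (subK ς κ₀) - εstar j (subK ς κ₀)) P μ ≤ M + M := by
          refine le_trans (eLpNorm_sub_le (hε j _).1.aestronglyMeasurable
            (hεstarLp j _).aestronglyMeasurable hP1) ?_
          exact add_le_add (hM _ (hε j _).1 (hε j _).2) (hεstarM j _)
        exact mul_le_mul' h1 h2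
    · rw [if_neg ht]
      have hz : (fun ω => g ℓ ς t ω - gs ℓ ς t ω) = fun _ => (0 : ℂ) := by
        funext ω
        rcases t with ⟨κ, j | j⟩
        · simp only [hg, hgs, Sum.elim_inl, hvstar j (subK ς κ),
            if_neg (hsubne κ ht), sub_self]
        · simp only [hg, hgs, Sum.elim_inr, hεstar j (subK ς κ),
            if_neg (hsubne κ ht), sub_self]
      rw [hz]
      simp [eLpNorm_zero]
  -- the uniform bound B on partial-sum differences
  set B : ℝ≥0∞ := ENNReal.ofReal ((AX + AXi) * R) * (M + M) with hB
  have hsumB : ∀ F : Finset ι,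
      eLpNorm (fun ω => (∑ t ∈ F, g ℓ ς t ω) - ∑ t ∈ F, gs ℓ ς t ω) P μ ≤ B := by
    intro F
    have hrw : (fun ω => (∑ t ∈ F, g ℓ ς t ω) - ∑ t ∈ F, gs ℓ ς t ω) =
        ∑ t ∈ F, (fun ω => g ℓ ς t ω - gs ℓ ς t ω) := by
      funext ω
      simp [Finset.sum_sub_distrib, Finset.sum_apply]
    rw [hrw]
    refine le_trans (eLpNorm_sum_le
      (fun t _ => (hgm ℓ ς t).sub (hgsm ℓ ς t)) hP1) ?_
    calc ∑ t ∈ F, eLpNorm (fun ω => g ℓ ς t ω - gs ℓ ς t ω) P μ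
        ≤ ∑ t ∈ F, (if t.1 = κ₀ then d t.2 else 0) :=
          Finset.sum_le_sum fun t _ => hdiff t
      _ = ∑ t ∈ F.filter (fun t => t.1 = κ₀), d t.2 := (Finset.sum_filter _ _).symm
      _ = ∑ j ∈ (F.filter (fun t => t.1 = κ₀)).image Prod.snd, d j := by
          refine (Finset.sum_image ?_).symm
          intro a ha b hb hab
          have ha' := (Finset.mem_filter.mp ha).2
          have hb' := (Finset.mem_filter.mp hb).2
          exact Prod.ext (ha'.trans hb'.symm) hab
      _ ≤ B := by
          set G : Finset (Fin q ⊕ ℕ) := (F.filter (fun t => t.1 = κ₀)).image Prod.snd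
          have hsplit : ∑ j ∈ G, d j =
              (∑ a ∈ G.toLeft, d (Sum.inl a)) + ∑ b ∈ G.toRight, d (Sum.inr b) := by
            conv_lhs => rw [← Finset.toLeft_disjSum_toRight (u := G)]
            rw [Finset.sum_disjSum]
          rw [hsplit]
          have hL : ∑ a ∈ G.toLeft, d (Sum.inl a) ≤ ENNReal.ofReal (AX * R) * (M + M) := by
            simp only [hd, Sum.elim_inl]
            rw [← Finset.sum_mul]
            refine mul_le_mul' ?_ le_rfl
            refine le_trans (Finset.sum_le_sum_of_subset (Finset.subset_univ _)) ?_
            rw [← ENNReal.ofReal_sum_of_nonneg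
              (fun j _ => mul_nonneg (hAχpos ℓ j).le hRpos.le)]
            refine ENNReal.ofReal_le_ofReal ?_
            rw [← Finset.sum_mul]
            exact mul_le_mul_of_nonneg_right (hAχsum ℓ) hRpos.le
          have hRt : ∑ b ∈ G.toRight, d (Sum.inr b) ≤ ENNReal.ofReal (AXi * R) * (M + M) := by
            simp only [hd, Sum.elim_inr]
            rw [← Finset.sum_mul]
            refine mul_le_mul' ?_ le_rfl
            rw [← ENNReal.ofReal_sum_of_nonneg
              (fun j _ => mul_nonneg (hAξpos ℓ j).le hRpos.le)]
            refine ENNReal.ofReal_le_ofReal ?_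
            rw [← Finset.sum_mul]
            refine mul_le_mul_of_nonneg_right ?_ hRpos.le
            exact le_trans (Summable.sum_le_tsum G.toRight (fun i _ => (hAξpos ℓ i).le)
              (hAξsum ℓ).1) (hAξsum ℓ).2
          refine le_trans (add_le_add hL hRt) ?_
          rw [hB, ← add_mul, ← ENNReal.ofReal_add
            (mul_nonneg hAXnn hRpos.le) (mul_nonneg hAXinn hRpos.le), ← add_mul]
  -- conclude
  have hfinal : eLpNorm (fun ω => x ℓ ς ω - xstar ℓ ς ω) P μ ≤ B := main ℓ ς B hsumB
  have hmem : MemLp (fun ω => x ℓ ς ω - xstar ℓ ς ω) P μ := (hx ℓ ς).1.sub (hxstar ℓ ς).1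
  rw [hmem.eLpNorm_eq_integral_rpow_norm hP0 hPtop, hPt] at hfinal
  have hBle : B ≤ ENNReal.ofReal (C0 * R) := by
    rw [hB, hC0]
    rw [← ENNReal.ofReal_add (Real.rpow_nonneg hAbar.le _) (Real.rpow_nonneg hAbar.le _),
      ← ENNReal.ofReal_mul (mul_nonneg (by linarith) hRpos.le)]
    refine ENNReal.ofReal_le_ofReal (le_of_eq ?_)
    ring
  have hineq : (∫ ω, ‖x ℓ ς ω - xstar ℓ ς ω‖ ^ p ∂μ) ^ p⁻¹ ≤ C0 * R := by
    have := le_trans hfinal hBle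
    rwa [ENNReal.ofReal_le_ofReal_iff (mul_nonneg hC0nn hRpos.le)] at this
  rw [one_div]
  calc (∫ ω, ‖x ℓ ς ω - xstar ℓ ς ω‖ ^ p ∂μ) ^ p⁻¹ ≤ C0 * R := hineq
    _ ≤ (C0 + 1) * R := by nlinarith
    _ = (C0 + 1) * m₁ ^ ς.1.natAbs * m₂ ^ ς.2.1.natAbs * m₃ ^ ς.2.2.toNat := by
        rw [hR]; ring

end
end

section
/- There exists a finite constant C > 0, depending only on A^ξ, ρ^ξ₁, ρ^ξ₂ and ρ^ξ₃, such that sup_{θ∈Θ} sup_{n>q} λˣ_{n,q+1}(θ) ≤ C; that is, since Σ^χ_n(θ) has rank at most q, the (q+1)-th largest eigenvalue of the spectral density matrix Σˣ_n(θ) = Σ^χ_n(θ) + Σ^ξ_n(θ) is bounded uniformly over all dimensions n and all frequencies θ. -/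
open Matrix ComplexOrder

noncomputable section

lemma quad_eig {n : ℕ} {A : Matrix (Fin n) (Fin n) ℂ} (hA : A.IsHermitian) (x : Fin n → ℂ) :
    star x ⬝ᵥ (A *ᵥ x) =
      ∑ i, (hA.eigenvalues i : ℂ) *
        Complex.normSq ((star (hA.eigenvectorUnitary : Matrix (Fin n) (Fin n) ℂ) *ᵥ x) i) := by
  set V : Matrix (Fin n) (Fin n) ℂ := (hA.eigenvectorUnitary : Matrix (Fin n) (Fin n) ℂ) with hV
  set y := star V *ᵥ x with hy
  have hsty : star x ᵥ* V = star y := by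
    rw [hy, star_mulVec, Matrix.star_eq_conjTranspose, conjTranspose_conjTranspose]
  calc star x ⬝ᵥ (A *ᵥ x)
      = star x ⬝ᵥ ((V * diagonal (RCLike.ofReal ∘ hA.eigenvalues) * star V) *ᵥ x) := by
        conv_lhs => rw [hA.spectral_theorem, Unitary.conjStarAlgAut_apply]
    _ = (star x ᵥ* V) ⬝ᵥ (diagonal (RCLike.ofReal ∘ hA.eigenvalues) *ᵥ y) := by
        rw [Matrix.mul_assoc, ← mulVec_mulVec, dotProduct_mulVec, ← mulVec_mulVec]
    _ = ∑ i, (hA.eigenvalues i : ℂ) * Complex.normSq (y i) := by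
        rw [hsty]
        simp only [dotProduct, mulVec_diagonal, Pi.star_apply, Function.comp_apply,
          Complex.star_def]
        refine Finset.sum_congr rfl fun i _ => ?_
        rw [mul_comm (RCLike.ofReal _) (y i), ← mul_assoc,
          mul_comm ((starRingEnd ℂ) (y i)) (y i), Complex.mul_conj, mul_comm]
        rfl

lemma quad_one {n : ℕ} {A : Matrix (Fin n) (Fin n) ℂ} (hA : A.IsHermitian) (x : Fin n → ℂ) :
    star x ⬝ᵥ x =
      ∑ i, (Complex.normSq ((star (hA.eigenvectorUnitary : Matrix (Fin n) (Fin n) ℂ) *ᵥ x) i) : ℂ) := by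
  set V : Matrix (Fin n) (Fin n) ℂ := (hA.eigenvectorUnitary : Matrix (Fin n) (Fin n) ℂ) with hV
  set y := star V *ᵥ x with hy
  have hsty : star x ᵥ* V = star y := by
    rw [hy, star_mulVec, Matrix.star_eq_conjTranspose, conjTranspose_conjTranspose]
  have hVstV : V * star V = 1 := (Matrix.mem_unitaryGroup_iff).mp hA.eigenvectorUnitary.2
  calc star x ⬝ᵥ x = star x ⬝ᵥ ((V * star V) *ᵥ x) := by rw [hVstV, one_mulVec]
    _ = star y ⬝ᵥ y := by rw [← mulVec_mulVec, dotProduct_mulVec, hsty]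
    _ = ∑ i, (Complex.normSq (y i) : ℂ) := by
        simp only [dotProduct, Pi.star_apply, Complex.star_def]
        refine Finset.sum_congr rfl fun i _ => ?_
        rw [mul_comm, Complex.mul_conj]

lemma card_eig_gt_le {n q : ℕ} {A : Matrix (Fin n) (Fin n) ℂ} (hA : A.IsHermitian) (C : ℝ)
    (F : (Fin n → ℂ) →ₗ[ℂ] (Fin q → ℂ))
    (hW : ∀ x : Fin n → ℂ, F x = 0 →
      Complex.re (star x ⬝ᵥ (A *ᵥ x)) ≤ C * Complex.re (star x ⬝ᵥ x)) :
    (Finset.univ.filter fun i => C < hA.eigenvalues i).card ≤ q := by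
  classical
  set T : Finset (Fin n) := Finset.univ.filter fun i => C < hA.eigenvalues i with hT
  set V : Matrix (Fin n) (Fin n) ℂ := (hA.eigenvectorUnitary : Matrix (Fin n) (Fin n) ℂ) with hV
  have hVstV : V * star V = 1 := (Matrix.mem_unitaryGroup_iff).mp hA.eigenvectorUnitary.2
  set G : (Fin n → ℂ) →ₗ[ℂ] ({ i : Fin n // i ∉ T } → ℂ) :=
    (LinearMap.funLeft ℂ ℂ (Subtype.val : { i : Fin n // i ∉ T } → Fin n)).comp
      (Matrix.mulVecLin (star V)) with hG
  have hker : T.card ≤ Module.finrank ℂ (LinearMap.ker G) := by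
    have h1 := LinearMap.finrank_range_add_finrank_ker G
    have h2 : Module.finrank ℂ (Fin n → ℂ) = n := by
      simp [Module.finrank_fintype_fun_eq_card]
    have h3 : Module.finrank ℂ (LinearMap.range G) ≤ Fintype.card { i : Fin n // i ∉ T } := by
      calc Module.finrank ℂ (LinearMap.range G)
          ≤ Module.finrank ℂ ({ i : Fin n // i ∉ T } → ℂ) := Submodule.finrank_le _
        _ = Fintype.card { i : Fin n // i ∉ T } := by simp [Module.finrank_fintype_fun_eq_card]
    have h4 : Fintype.card { i : Fin n // i ∉ T } = n - T.card := by
      simp [Fintype.card_subtype_compl, Fintype.card_coe]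
    have h5 : T.card ≤ n := by
      simpa using Finset.card_le_card (Finset.subset_univ T)
    omega
  have hinj : ∀ x, G x = 0 → F x = 0 → x = 0 := by
    intro x hGx hFx
    by_contra hx0
    set y := star V *ᵥ x with hy
    have hyT : ∀ i : Fin n, i ∉ T → y i = 0 := by
      intro i hi
      have := congrFun hGx ⟨i, hi⟩
      simpa [hG, LinearMap.funLeft] using this
    have hy0 : y ≠ 0 := by
      intro h
      apply hx0
      have hx : x = (V * star V) *ᵥ x := by rw [hVstV, one_mulVec]
      rw [hx, ← mulVec_mulVec, ← hy, h, mulVec_zero]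
    obtain ⟨i0, hi0⟩ : ∃ i, y i ≠ 0 := by
      by_contra h; push_neg at h; exact hy0 (funext h)
    have hi0T : i0 ∈ T := by by_contra h; exact hi0 (hyT i0 h)
    have hgt : C < hA.eigenvalues i0 := by simpa [hT] using hi0T
    have hq1 := quad_eig hA x
    have hq2 := quad_one hA x
    have hre1 : Complex.re (star x ⬝ᵥ (A *ᵥ x)) =
        ∑ i, hA.eigenvalues i * Complex.normSq (y i) := by
      rw [hq1]; push_cast [Complex.re_sum]; simp; rfl
    have hre2 : Complex.re (star x ⬝ᵥ x) = ∑ i, Complex.normSq (y i) := by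
      rw [hq2]; push_cast [Complex.re_sum]; simp; rfl
    have hle := hW x hFx
    rw [hre1, hre2, Finset.mul_sum] at hle
    have hsum : ∑ i, C * Complex.normSq (y i) < ∑ i, hA.eigenvalues i * Complex.normSq (y i) := by
      apply Finset.sum_lt_sum
      · intro i _
        by_cases h : i ∈ T
        · have : C ≤ hA.eigenvalues i := le_of_lt (by simpa [hT] using h)
          exact mul_le_mul_of_nonneg_right this (Complex.normSq_nonneg _)
        · simp [hyT i h]
      · exact ⟨i0, Finset.mem_univ _, by
          have := Complex.normSq_pos.mpr hi0
          exact mul_lt_mul_of_pos_right hgt this⟩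
    linarith
  have hkerbot : LinearMap.ker (F.domRestrict (LinearMap.ker G)) = ⊥ := by
    rw [LinearMap.ker_eq_bot']
    rintro ⟨x, hx⟩ hFx
    have : x = 0 := hinj x (LinearMap.mem_ker.mp hx) (by simpa using hFx)
    exact Subtype.ext this
  have hle : Module.finrank ℂ (LinearMap.ker G) ≤ Module.finrank ℂ (Fin q → ℂ) :=
    LinearMap.finrank_le_finrank_of_injective (LinearMap.ker_eq_bot.mp hkerbot)
  have hfq : Module.finrank ℂ (Fin q → ℂ) = q := by simp [Module.finrank_fintype_fun_eq_card]
  omega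

lemma sorted_getD_le {l : List ℝ} (hl : l.Pairwise (· ≤ ·)) (C : ℝ) (k : ℕ) (hk : k < l.length)
    (hc : l.countP (fun x => decide (C < x)) + k < l.length) : l.getD k 0 ≤ C := by
  by_contra h
  push_neg at h
  rw [List.getD_eq_getElem l 0 hk] at h
  have hdrop : l.drop k = l[k] :: l.drop (k + 1) := List.drop_eq_getElem_cons hk
  have hsorted : (l.drop k).Pairwise (· ≤ ·) := hl.drop
  have hall : ∀ a ∈ l.drop k, C < a := by
    intro a ha
    rw [hdrop] at ha hsorted
    rcases List.mem_cons.mp ha with rfl | ha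
    · exact h
    · exact lt_of_lt_of_le h ((List.pairwise_cons.mp hsorted).1 a ha)
  have h1 : (l.drop k).countP (fun x => decide (C < x)) = (l.drop k).length :=
    List.countP_eq_length.mpr (fun a ha => decide_eq_true (hall a ha))
  have h2 : l.countP (fun x => decide (C < x)) =
      (l.take k).countP (fun x => decide (C < x)) +
        (l.drop k).countP (fun x => decide (C < x)) := by
    conv_lhs => rw [← List.take_append_drop k l]
    rw [List.countP_append]
  have h3 : (l.drop k).length = l.length - k := List.length_drop
  omega

lemma summable_geom_int {ρ : ℝ} (h0 : 0 < ρ) (h1 : ρ < 1) :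
    Summable fun k : ℤ => ρ ^ k.natAbs := by
  apply Summable.of_nat_of_neg
  · simpa using summable_geometric_of_lt_one h0.le h1
  · simpa using summable_geometric_of_lt_one h0.le h1

set_option maxHeartbeats 1000000 in
/-- with `Σˣ_n(θ) = Σ^χ_n(θ) + Σ^ξ_n(θ)`, where the rank-≤q common part
`Σ^χ_n(θ)` has entries `Σ_{j≤q} b_{ij}(θ) conj(b_{ℓj}(θ))` and the idiosyncratic part
`Σ^ξ_n(θ)` has entries `Σ_{j∈ℕ} g_{ij}(θ) conj(g_{ℓj}(θ))` built from geometrically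
bounded filter coefficients, the `(q+1)`-th largest eigenvalue of `Σˣ_n(θ)` is bounded
by a constant `C` (depending only on `A^ξ, ρ^ξ₁, ρ^ξ₂, ρ^ξ₃`) uniformly over all
dimensions `n > q` and all frequencies `θ ∈ Θ`. -/
theorem stmt_17 (q : ℕ)
    (c : ℕ → Fin q → ℤ × ℤ × ℕ → ℂ) (β : ℕ → ℕ → ℤ × ℤ × ℕ → ℂ)
    (ρχ₁ ρχ₂ ρχ₃ ρξ₁ ρξ₂ ρξ₃ : ℝ)
    (hρχ₁ : ρχ₁ ∈ Set.Ioo (0 : ℝ) 1) (hρχ₂ : ρχ₂ ∈ Set.Ioo (0 : ℝ) 1)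
    (hρχ₃ : ρχ₃ ∈ Set.Ioo (0 : ℝ) 1) (hρξ₁ : ρξ₁ ∈ Set.Ioo (0 : ℝ) 1)
    (hρξ₂ : ρξ₂ ∈ Set.Ioo (0 : ℝ) 1) (hρξ₃ : ρξ₃ ∈ Set.Ioo (0 : ℝ) 1)
    (Aχ : ℕ → Fin q → ℝ) (Aξ : ℕ → ℕ → ℝ)
    (hAχpos : ∀ ℓ j, 0 < Aχ ℓ j) (hAξpos : ∀ ℓ j, 0 < Aξ ℓ j)
    (hc : ∀ ℓ j κ, ‖c ℓ j κ‖ ≤ Aχ ℓ j * ρχ₁ ^ κ.1.natAbs * ρχ₂ ^ κ.2.1.natAbs * ρχ₃ ^ κ.2.2)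
    (hβ : ∀ ℓ j κ, ‖β ℓ j κ‖ ≤ Aξ ℓ j * ρξ₁ ^ κ.1.natAbs * ρξ₂ ^ κ.2.1.natAbs * ρξ₃ ^ κ.2.2)
    (AX AXi : ℝ)
    (hAχsum : ∀ ℓ, ∑ j, Aχ ℓ j ≤ AX)
    (hAξrow : ∀ ℓ, Summable (Aξ ℓ) ∧ ∑' j, Aξ ℓ j ≤ AXi)
    (hAξcol : ∀ j, Summable (fun ℓ => Aξ ℓ j) ∧ ∑' ℓ, Aξ ℓ j ≤ AXi)
    (bχ : ℕ → Fin q → (Fin 3 → ℝ) → ℂ) (g : ℕ → ℕ → (Fin 3 → ℝ) → ℂ)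
    (hbχ : ∀ ℓ j θ, bχ ℓ j θ =
      ∑' κ : ℤ × ℤ × ℕ, c ℓ j κ * Complex.exp (-(Complex.I * (kdot κ θ : ℝ))))
    (hg : ∀ ℓ j θ, g ℓ j θ =
      ∑' κ : ℤ × ℤ × ℕ, β ℓ j κ * Complex.exp (-(Complex.I * (kdot κ θ : ℝ)))) :
    ∃ C > 0, ∀ θ ∈ Theta, ∀ n : ℕ, q < n →
      eigJ (Matrix.of fun i ℓ : Fin n =>
        (∑ j : Fin q, bχ (i : ℕ) j θ * (starRingEnd ℂ) (bχ (ℓ : ℕ) j θ)) +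
        (∑' j : ℕ, g (i : ℕ) j θ * (starRingEnd ℂ) (g (ℓ : ℕ) j θ))) (q + 1) ≤ C := by
  classical
  -- geometric weight and its sum
  set geom : ℤ × ℤ × ℕ → ℝ := fun κ => ρξ₁ ^ κ.1.natAbs * (ρξ₂ ^ κ.2.1.natAbs * ρξ₃ ^ κ.2.2)
    with hgeomdef
  have hgeom_nonneg : ∀ κ, 0 ≤ geom κ := fun κ =>
    mul_nonneg (pow_nonneg hρξ₁.1.le _) (mul_nonneg (pow_nonneg hρξ₂.1.le _)
      (pow_nonneg hρξ₃.1.le _))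
  have hgeom_sum : Summable geom := by
    have s1 : Summable fun k : ℤ => ρξ₁ ^ k.natAbs := by
      apply Summable.of_nat_of_neg <;> simpa using summable_geometric_of_lt_one hρξ₁.1.le hρξ₁.2
    have s2 : Summable fun k : ℤ => ρξ₂ ^ k.natAbs := by
      apply Summable.of_nat_of_neg <;> simpa using summable_geometric_of_lt_one hρξ₂.1.le hρξ₂.2
    have s3 : Summable fun k : ℕ => ρξ₃ ^ k := summable_geometric_of_lt_one hρξ₃.1.le hρξ₃.2
    have s23 : Summable fun p : ℤ × ℕ => ρξ₂ ^ p.1.natAbs * ρξ₃ ^ p.2 :=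
      s2.mul_of_nonneg s3 (fun k => pow_nonneg hρξ₂.1.le _) (fun k => pow_nonneg hρξ₃.1.le _)
    exact s1.mul_of_nonneg s23 (fun k => pow_nonneg hρξ₁.1.le _)
      (fun p => mul_nonneg (pow_nonneg hρξ₂.1.le _) (pow_nonneg hρξ₃.1.le _))
  set B := ∑' κ, geom κ with hBdef
  have hBpos : 0 < B := by
    have h0 : geom (0, 0, 0) ≤ B := hgeom_sum.le_tsum _ (fun κ _ => hgeom_nonneg κ)
    have : geom (0, 0, 0) = 1 := by simp [hgeomdef]
    linarith
  have hAXipos : 0 < AXi :=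
    lt_of_lt_of_le (hAξpos 0 0)
      (le_trans ((hAξrow 0).1.le_tsum 0 fun j _ => (hAξpos 0 j).le) (hAξrow 0).2)
  refine ⟨B ^ 2 * AXi ^ 2 + 1, by positivity, fun θ _ n hn => ?_⟩
  set C : ℝ := B ^ 2 * AXi ^ 2 + 1 with hCdef
  have hCpos : 0 < C := by positivity
  -- bound on ‖g‖
  have hAξle : ∀ ℓ j, Aξ ℓ j ≤ AXi := fun ℓ j =>
    le_trans ((hAξrow ℓ).1.le_tsum j fun j' _ => (hAξpos ℓ j').le) (hAξrow ℓ).2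
  have hgb : ∀ ℓ j, ‖g ℓ j θ‖ ≤ Aξ ℓ j * B := by
    intro ℓ j
    rw [hg]
    have hterm : ∀ κ, ‖β ℓ j κ * Complex.exp (-(Complex.I * (kdot κ θ : ℝ)))‖ ≤
        Aξ ℓ j * geom κ := by
      intro κ
      rw [norm_mul]
      have hexp : ‖Complex.exp (-(Complex.I * (kdot κ θ : ℝ)))‖ = 1 := by
        rw [Complex.norm_exp]
        simp
      rw [hexp, mul_one]
      calc ‖β ℓ j κ‖ ≤ Aξ ℓ j * ρξ₁ ^ κ.1.natAbs * ρξ₂ ^ κ.2.1.natAbs * ρξ₃ ^ κ.2.2 := hβ ℓ j κ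
        _ = Aξ ℓ j * geom κ := by rw [hgeomdef]; ring
    have hs : Summable fun κ => ‖β ℓ j κ * Complex.exp (-(Complex.I * (kdot κ θ : ℝ)))‖ :=
      Summable.of_nonneg_of_le (fun _ => norm_nonneg _) hterm (hgeom_sum.mul_left _)
    calc ‖∑' κ, β ℓ j κ * Complex.exp (-(Complex.I * (kdot κ θ : ℝ)))‖
        ≤ ∑' κ, ‖β ℓ j κ * Complex.exp (-(Complex.I * (kdot κ θ : ℝ)))‖ :=
          norm_tsum_le_tsum_norm hs
      _ ≤ ∑' κ, Aξ ℓ j * geom κ := Summable.tsum_le_tsum hterm hs (hgeom_sum.mul_left _)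
      _ = Aξ ℓ j * B := by rw [tsum_mul_left]
  have hgnn : ∀ ℓ j, (0:ℝ) ≤ Aξ ℓ j * B := fun ℓ j => mul_nonneg (hAξpos ℓ j).le hBpos.le
  -- K
  have hKsum : ∀ i ℓ : ℕ, Summable fun j => Aξ i j * Aξ ℓ j := by
    intro i ℓ
    refine Summable.of_nonneg_of_le (fun j => mul_nonneg (hAξpos i j).le (hAξpos ℓ j).le)
      (fun j => ?_) ((hAξrow i).1.mul_right AXi)
    exact mul_le_mul_of_nonneg_left (hAξle ℓ j) (hAξpos i j).le
  set K : ℕ → ℕ → ℝ := fun i ℓ => ∑' j, Aξ i j * Aξ ℓ j with hKdef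
  have hKnonneg : ∀ i ℓ, 0 ≤ K i ℓ :=
    fun i ℓ => tsum_nonneg fun j => mul_nonneg (hAξpos i j).le (hAξpos ℓ j).le
  have hKsymm : ∀ i ℓ, K i ℓ = K ℓ i := fun i ℓ => tsum_congr fun j => mul_comm _ _
  -- entry bound
  have hMξ : ∀ i ℓ : ℕ, ‖∑' j : ℕ, g i j θ * (starRingEnd ℂ) (g ℓ j θ)‖ ≤ B ^ 2 * K i ℓ := by
    intro i ℓ
    have hterm : ∀ j, ‖g i j θ * (starRingEnd ℂ) (g ℓ j θ)‖ ≤ B ^ 2 * (Aξ i j * Aξ ℓ j) := by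
      intro j
      rw [norm_mul, RingHomIsometric.norm_map]
      calc ‖g i j θ‖ * ‖g ℓ j θ‖ ≤ (Aξ i j * B) * (Aξ ℓ j * B) :=
            mul_le_mul (hgb i j) (hgb ℓ j) (norm_nonneg _) (hgnn i j)
        _ = B ^ 2 * (Aξ i j * Aξ ℓ j) := by ring
    have hsB : Summable fun j => B ^ 2 * (Aξ i j * Aξ ℓ j) := (hKsum i ℓ).mul_left _
    have hs : Summable fun j => ‖g i j θ * (starRingEnd ℂ) (g ℓ j θ)‖ :=
      Summable.of_nonneg_of_le (fun _ => norm_nonneg _) hterm hsB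
    calc ‖∑' j : ℕ, g i j θ * (starRingEnd ℂ) (g ℓ j θ)‖
        ≤ ∑' j, ‖g i j θ * (starRingEnd ℂ) (g ℓ j θ)‖ := norm_tsum_le_tsum_norm hs
      _ ≤ ∑' j, B ^ 2 * (Aξ i j * Aξ ℓ j) := Summable.tsum_le_tsum hterm hs hsB
      _ = B ^ 2 * K i ℓ := by rw [tsum_mul_left]
  -- row sums of K
  have hKrow : ∀ (i : ℕ) (s : Finset ℕ), ∑ ℓ ∈ s, K i ℓ ≤ AXi * AXi := by
    intro i s
    have hswap : ∑ ℓ ∈ s, K i ℓ = ∑' j, ∑ ℓ ∈ s, Aξ i j * Aξ ℓ j :=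
      (Summable.tsum_finsetSum (fun ℓ _ => hKsum i ℓ)).symm
    rw [hswap]
    have hsum1 : Summable fun j => ∑ ℓ ∈ s, Aξ i j * Aξ ℓ j :=
      (hasSum_sum fun ℓ _ => (hKsum i ℓ).hasSum).summable
    have hb : ∀ j, ∑ ℓ ∈ s, Aξ i j * Aξ ℓ j ≤ Aξ i j * AXi := by
      intro j
      rw [← Finset.mul_sum]
      refine mul_le_mul_of_nonneg_left ?_ (hAξpos i j).le
      calc ∑ ℓ ∈ s, Aξ ℓ j ≤ ∑' ℓ, Aξ ℓ j :=
            Summable.sum_le_tsum s (fun ℓ _ => (hAξpos ℓ j).le) (hAξcol j).1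
        _ ≤ AXi := (hAξcol j).2
    calc ∑' j, ∑ ℓ ∈ s, Aξ i j * Aξ ℓ j ≤ ∑' j, Aξ i j * AXi :=
          Summable.tsum_le_tsum hb hsum1 ((hAξrow i).1.mul_right _)
      _ = (∑' j, Aξ i j) * AXi := tsum_mul_right
      _ ≤ AXi * AXi := mul_le_mul_of_nonneg_right (hAξrow i).2 hAXipos.le
  -- the matrix
  set M : Matrix (Fin n) (Fin n) ℂ := Matrix.of fun i ℓ : Fin n =>
      (∑ j : Fin q, bχ (i : ℕ) j θ * (starRingEnd ℂ) (bχ (ℓ : ℕ) j θ)) +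
      (∑' j : ℕ, g (i : ℕ) j θ * (starRingEnd ℂ) (g (ℓ : ℕ) j θ)) with hMdef
  show eigJ M (q + 1) ≤ C
  rw [eigJ]
  split_ifs with hHerm
  swap
  · exact hCpos.le
  -- the linear map F
  set F : (Fin n → ℂ) →ₗ[ℂ] (Fin q → ℂ) :=
    (Matrix.of fun (j : Fin q) (ℓ : Fin n) => (starRingEnd ℂ) (bχ (ℓ : ℕ) j θ)).mulVecLin with hFdef
  have hWq : ∀ x : Fin n → ℂ, F x = 0 →
      Complex.re (star x ⬝ᵥ (M *ᵥ x)) ≤ C * Complex.re (star x ⬝ᵥ x) := by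
    intro x hFx
    set N : Fin n → ℝ := fun i => ‖x i‖ with hNdef
    have hNnn : ∀ i, 0 ≤ N i := fun i => norm_nonneg _
    have hFxj : ∀ j : Fin q, ∑ ℓ : Fin n, (starRingEnd ℂ) (bχ (ℓ : ℕ) j θ) * x ℓ = 0 := by
      intro j
      have h := congrFun hFx j
      simpa [hFdef, Matrix.mulVecLin_apply, Matrix.mulVec, dotProduct] using h
    have hMx : ∀ i : Fin n, (M *ᵥ x) i =
        ∑ ℓ : Fin n, (∑' j : ℕ, g (i : ℕ) j θ * (starRingEnd ℂ) (g (ℓ : ℕ) j θ)) * x ℓ := by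
      intro i
      have h1 : (M *ᵥ x) i = ∑ ℓ : Fin n,
          ((∑ j : Fin q, bχ (i : ℕ) j θ * (starRingEnd ℂ) (bχ (ℓ : ℕ) j θ)) +
            (∑' j : ℕ, g (i : ℕ) j θ * (starRingEnd ℂ) (g (ℓ : ℕ) j θ))) * x ℓ := by
        simp only [hMdef, Matrix.mulVec, dotProduct, Matrix.of_apply]
      rw [h1]
      rw [Finset.sum_congr rfl fun ℓ _ => add_mul _ _ _, Finset.sum_add_distrib]
      have hz : ∑ ℓ : Fin n,
          (∑ j : Fin q, bχ (i : ℕ) j θ * (starRingEnd ℂ) (bχ (ℓ : ℕ) j θ)) * x ℓ = 0 := by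
        have h2 : ∀ ℓ : Fin n,
            (∑ j : Fin q, bχ (i : ℕ) j θ * (starRingEnd ℂ) (bχ (ℓ : ℕ) j θ)) * x ℓ =
            ∑ j : Fin q, bχ (i : ℕ) j θ * ((starRingEnd ℂ) (bχ (ℓ : ℕ) j θ) * x ℓ) := by
          intro ℓ
          rw [Finset.sum_mul]
          exact Finset.sum_congr rfl fun j _ => mul_assoc _ _ _
        rw [Finset.sum_congr rfl fun ℓ _ => h2 ℓ, Finset.sum_comm]
        refine Finset.sum_eq_zero fun j _ => ?_
        rw [← Finset.mul_sum, hFxj j, mul_zero]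
      rw [hz, zero_add]
    -- norm bound on the quadratic form
    have hMxb : ∀ i : Fin n, ‖(M *ᵥ x) i‖ ≤ ∑ ℓ : Fin n, B ^ 2 * K (i : ℕ) (ℓ : ℕ) * N ℓ := by
      intro i
      rw [hMx i]
      calc ‖∑ ℓ : Fin n, (∑' j : ℕ, g (i : ℕ) j θ * (starRingEnd ℂ) (g (ℓ : ℕ) j θ)) * x ℓ‖
          ≤ ∑ ℓ : Fin n, ‖(∑' j : ℕ, g (i : ℕ) j θ * (starRingEnd ℂ) (g (ℓ : ℕ) j θ)) * x ℓ‖ :=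
            norm_sum_le _ _
        _ ≤ ∑ ℓ : Fin n, B ^ 2 * K (i : ℕ) (ℓ : ℕ) * N ℓ := by
            refine Finset.sum_le_sum fun ℓ _ => ?_
            rw [norm_mul]
            exact mul_le_mul_of_nonneg_right (hMξ _ _) (hNnn ℓ)
    have hstep1 : Complex.re (star x ⬝ᵥ (M *ᵥ x)) ≤
        ∑ i : Fin n, ∑ ℓ : Fin n, N i * (B ^ 2 * K (i : ℕ) (ℓ : ℕ) * N ℓ) := by
      calc Complex.re (star x ⬝ᵥ (M *ᵥ x)) ≤ ‖star x ⬝ᵥ (M *ᵥ x)‖ :=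
            Complex.re_le_norm _
        _ = ‖∑ i : Fin n, star (x i) * (M *ᵥ x) i‖ := by
            congr 1
        _ ≤ ∑ i : Fin n, ‖star (x i) * (M *ᵥ x) i‖ := norm_sum_le _ _
        _ ≤ ∑ i : Fin n, ∑ ℓ : Fin n, N i * (B ^ 2 * K (i : ℕ) (ℓ : ℕ) * N ℓ) := by
            refine Finset.sum_le_sum fun i _ => ?_
            rw [norm_mul]
            have hsxi : ‖star (x i)‖ = N i := by
              rw [hNdef]; simp
            rw [hsxi]
            calc N i * ‖(M *ᵥ x) i‖
                ≤ N i * ∑ ℓ : Fin n, B ^ 2 * K (i : ℕ) (ℓ : ℕ) * N ℓ :=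
                  mul_le_mul_of_nonneg_left (hMxb i) (hNnn i)
              _ = ∑ ℓ : Fin n, N i * (B ^ 2 * K (i : ℕ) (ℓ : ℕ) * N ℓ) := Finset.mul_sum _ _ _
    have hsym : ∑ i : Fin n, ∑ ℓ : Fin n, N ℓ ^ 2 * K (i : ℕ) (ℓ : ℕ) =
        ∑ i : Fin n, ∑ ℓ : Fin n, N i ^ 2 * K (i : ℕ) (ℓ : ℕ) := by
      rw [Finset.sum_comm]
      exact Finset.sum_congr rfl fun i _ => Finset.sum_congr rfl fun ℓ _ => by
        rw [hKsymm]
    have hstep2 : ∑ i : Fin n, ∑ ℓ : Fin n, N i * (B ^ 2 * K (i : ℕ) (ℓ : ℕ) * N ℓ) ≤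
        B ^ 2 * ∑ i : Fin n, ∑ ℓ : Fin n, N i ^ 2 * K (i : ℕ) (ℓ : ℕ) := by
      have hterm : ∀ i ℓ : Fin n, N i * (B ^ 2 * K (i : ℕ) (ℓ : ℕ) * N ℓ) ≤
          (B ^ 2 / 2) * (N i ^ 2 * K (i : ℕ) (ℓ : ℕ)) +
          (B ^ 2 / 2) * (N ℓ ^ 2 * K (i : ℕ) (ℓ : ℕ)) := by
        intro i ℓ
        nlinarith [mul_nonneg (mul_nonneg (sq_nonneg B) (hKnonneg (i : ℕ) (ℓ : ℕ)))
          (sq_nonneg (N i - N ℓ))]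
      calc ∑ i : Fin n, ∑ ℓ : Fin n, N i * (B ^ 2 * K (i : ℕ) (ℓ : ℕ) * N ℓ)
          ≤ ∑ i : Fin n, ∑ ℓ : Fin n, ((B ^ 2 / 2) * (N i ^ 2 * K (i : ℕ) (ℓ : ℕ)) +
              (B ^ 2 / 2) * (N ℓ ^ 2 * K (i : ℕ) (ℓ : ℕ))) :=
            Finset.sum_le_sum fun i _ => Finset.sum_le_sum fun ℓ _ => hterm i ℓ
        _ = (B ^ 2 / 2) * (∑ i : Fin n, ∑ ℓ : Fin n, N i ^ 2 * K (i : ℕ) (ℓ : ℕ)) +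
            (B ^ 2 / 2) * (∑ i : Fin n, ∑ ℓ : Fin n, N ℓ ^ 2 * K (i : ℕ) (ℓ : ℕ)) := by
            rw [Finset.mul_sum, Finset.mul_sum, ← Finset.sum_add_distrib]
            refine Finset.sum_congr rfl fun i _ => ?_
            rw [Finset.mul_sum, Finset.mul_sum, ← Finset.sum_add_distrib]
        _ = B ^ 2 * ∑ i : Fin n, ∑ ℓ : Fin n, N i ^ 2 * K (i : ℕ) (ℓ : ℕ) := by
            rw [hsym]; ring
    have hstep3 : ∑ i : Fin n, ∑ ℓ : Fin n, N i ^ 2 * K (i : ℕ) (ℓ : ℕ) ≤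
        AXi ^ 2 * ∑ i : Fin n, N i ^ 2 := by
      calc ∑ i : Fin n, ∑ ℓ : Fin n, N i ^ 2 * K (i : ℕ) (ℓ : ℕ)
          = ∑ i : Fin n, N i ^ 2 * ∑ ℓ : Fin n, K (i : ℕ) (ℓ : ℕ) :=
            Finset.sum_congr rfl fun i _ => (Finset.mul_sum _ _ _).symm
        _ ≤ ∑ i : Fin n, N i ^ 2 * (AXi * AXi) := by
            refine Finset.sum_le_sum fun i _ => mul_le_mul_of_nonneg_left ?_ (sq_nonneg _)
            have := hKrow (i : ℕ) ((Finset.range n).image id)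
            calc ∑ ℓ : Fin n, K (i : ℕ) (ℓ : ℕ) = ∑ ℓ ∈ Finset.range n, K (i : ℕ) ℓ :=
                  Fin.sum_univ_eq_sum_range (fun ℓ => K (i : ℕ) ℓ) n
              _ ≤ AXi * AXi := hKrow (i : ℕ) (Finset.range n)
        _ = AXi ^ 2 * ∑ i : Fin n, N i ^ 2 := by
            rw [Finset.mul_sum]
            exact Finset.sum_congr rfl fun i _ => by ring
    have hre : Complex.re (star x ⬝ᵥ x) = ∑ i : Fin n, N i ^ 2 := by
      have h1 : star x ⬝ᵥ x = ∑ i : Fin n, star (x i) * x i := by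
        simp only [dotProduct, Pi.star_apply]
      rw [h1, Complex.re_sum]
      refine Finset.sum_congr rfl fun i _ => ?_
      rw [Complex.star_def, mul_comm, Complex.mul_conj, Complex.ofReal_re]
      simp [hNdef, Complex.normSq_eq_norm_sq]
    have hxnn : 0 ≤ ∑ i : Fin n, N i ^ 2 := Finset.sum_nonneg fun i _ => sq_nonneg _
    rw [hre]
    calc Complex.re (star x ⬝ᵥ (M *ᵥ x))
        ≤ B ^ 2 * ∑ i : Fin n, ∑ ℓ : Fin n, N i ^ 2 * K (i : ℕ) (ℓ : ℕ) :=
          le_trans hstep1 hstep2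
      _ ≤ B ^ 2 * (AXi ^ 2 * ∑ i : Fin n, N i ^ 2) :=
          mul_le_mul_of_nonneg_left hstep3 (sq_nonneg B)
      _ = (B ^ 2 * AXi ^ 2) * ∑ i : Fin n, N i ^ 2 := by ring
      _ ≤ C * ∑ i : Fin n, N i ^ 2 := by
          refine mul_le_mul_of_nonneg_right ?_ hxnn
          rw [hCdef]; linarith
  have hcount := card_eig_gt_le hHerm C F hWq
  -- conclude via the sorted list
  have hlen : ((Finset.univ.val.map hHerm.eigenvalues).sort (· ≤ ·)).length = n := by
    rw [Multiset.length_sort, Multiset.card_map, ← Finset.card_def, Finset.card_univ,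
      Fintype.card_fin]
  have hk1 : n - (q + 1) < ((Finset.univ.val.map hHerm.eigenvalues).sort (· ≤ ·)).length := by
    rw [hlen]; omega
  refine sorted_getD_le (Multiset.pairwise_sort _ _) C _ hk1 ?_
  have hcnt : ((Finset.univ.val.map hHerm.eigenvalues).sort (· ≤ ·)).countP
      (fun x => decide (C < x)) = (Finset.univ.filter fun i => C < hHerm.eigenvalues i).card := by
    rw [← Multiset.coe_countP (fun x => C < x), Multiset.sort_eq, Multiset.countP_map,
      Finset.card_def, Finset.filter_val]
  rw [hcnt, hlen]
  omega

end
end
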